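/- The logistic likelihood admits the Polya–Gamma integral representation: for any real η and y ∈ {0,1}, exp(yη)/(1+exp(η)) = (1/2)·exp(κη)·∫₀^∞ exp(−ω η²/2) p_PG(ω; 1, 0) dω, where κ = y − 1/2 and p_PG(·;1,0) is the density of the Polya–Gamma(1,0) distribution. -/

import Mathlib

open Real

/-- The logistic likelihood admits the Polya–Gamma integral representation: for any real `η`
and `y ∈ {0,1}`, `exp(yη)/(1+exp(η)) = (1/2)·exp(κη)·∫₀^∞ exp(−ω η²/2) p_PG(ω; 1, 0) dω`,
where `κ = y − 1/2` and `p_PG(·;1,0)` is the density of the Polya–Gamma(1,0) distribution,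
characterized by its Laplace transform `∫₀^∞ exp(−ωt) p_PG(ω;1,0) dω = 1/cosh(√(t/2))`. -/
theorem stmt10 (p : ℝ → ℝ) (hp : ∀ ω, 0 ≤ p ω)
    (hLaplace : ∀ t : ℝ, 0 ≤ t →
      ∫ ω in Set.Ioi (0 : ℝ), Real.exp (-(ω * t)) * p ω = (Real.cosh (Real.sqrt (t / 2)))⁻¹)
    (η y : ℝ) (hy : y = 0 ∨ y = 1) :
    Real.exp (y * η) / (1 + Real.exp η) =
      (1 / 2) * Real.exp ((y - 1 / 2) * η) *
        ∫ ω in Set.Ioi (0 : ℝ), Real.exp (-(ω * η ^ 2 / 2)) * p ω := by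
  have h := hLaplace (η ^ 2 / 2) (by positivity)
  have hsq : Real.sqrt (η ^ 2 / 2 / 2) = |η / 2| := by
    rw [show η ^ 2 / 2 / 2 = (η / 2) ^ 2 by ring, Real.sqrt_sq_eq_abs]
  rw [hsq, Real.cosh_abs] at h
  have heq : ∀ ω : ℝ, Real.exp (-(ω * η ^ 2 / 2)) = Real.exp (-(ω * (η ^ 2 / 2))) := by
    intro ω; ring_nf
  simp_rw [heq]
  rw [h, Real.cosh_eq]
  have h1 : Real.exp (η / 2) + Real.exp (-(η / 2)) ≠ 0 := by positivity
  have h2 : (1 : ℝ) + Real.exp η ≠ 0 := by positivity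
  field_simp
  have e1 : Real.exp η = Real.exp (η / 2) * Real.exp (η / 2) := by
    rw [← Real.exp_add]; ring_nf
  have e2 : Real.exp (η * (y * 2 - 1) / 2) = Real.exp (y * η) * Real.exp (-η / 2) := by
    rw [← Real.exp_add]; ring_nf
  have e3 : Real.exp (-η / 2) * Real.exp (η / 2) = 1 := by
    rw [← Real.exp_add, show -η / 2 + η / 2 = 0 by ring, Real.exp_zero]
  rw [neg_div] at e2 e3
  rw [e1, e2]
  linear_combination (-1) * Real.exp (y * η) * Real.exp (η / 2) * e3
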